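/- For n ≥ 5, the commutator subgroup B_n' is the normal closure in B_n of the single element σ_1σ_2^{−1}. -/

import Mathlib

/-- Artin braid relators for the braid group on `n` strands, with generators
`FreeGroup.of i` corresponding to `σ_{i+1}` for `i : Fin (n-1)`. -/
def braidRels (n : ℕ) : Set (FreeGroup (Fin (n - 1))) :=
  {r | ∃ i j : Fin (n - 1),
      ((j : ℕ) ≥ (i : ℕ) + 2 ∧
        r = FreeGroup.of i * FreeGroup.of j * (FreeGroup.of i)⁻¹ * (FreeGroup.of j)⁻¹) ∨
      ((j : ℕ) = (i : ℕ) + 1 ∧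
        r = FreeGroup.of i * FreeGroup.of j * FreeGroup.of i *
          (FreeGroup.of j * FreeGroup.of i * FreeGroup.of j)⁻¹)}

/-- The braid group on `n` strands. -/
def BraidGroup (n : ℕ) : Type := PresentedGroup (braidRels n)

instance (n : ℕ) : Group (BraidGroup n) :=
  inferInstanceAs (Group (PresentedGroup (braidRels n)))

/-- The Artin generator `σ_i` of `BraidGroup n`, for `1 ≤ i ≤ n-1` (junk value `1` otherwise). -/
def σ {n : ℕ} (i : ℕ) : BraidGroup n :=
  if h : 1 ≤ i ∧ i < n then PresentedGroup.of (⟨i - 1, by omega⟩ : Fin (n - 1)) else 1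

/-- The element `α = σ_1 σ_2 ⋯ σ_{n-1}`. -/
def α (n : ℕ) : BraidGroup n := ((List.range (n - 1)).map (fun i => σ (i + 1))).prod

/-- The half-twist `σ_j` for an index `j` taken modulo `n`, defined by conjugating
`σ_1` by the rotation `α`: `σ_{1+m} = α^m σ_1 α^{-m}`. -/
def σm {n : ℕ} (j : ℤ) : BraidGroup n := (α n) ^ (j - 1) * σ 1 * (α n) ^ (1 - j)

lemma braid_rel_eq_one {n : ℕ} {r : FreeGroup (Fin (n-1))} (h : r ∈ braidRels n) :
    PresentedGroup.mk (braidRels n) r = 1 :=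
  (QuotientGroup.eq_one_iff r).2 (Subgroup.subset_normalClosure h)

lemma sigma_of {n : ℕ} {i : ℕ} (h1 : 1 ≤ i) (h2 : i < n) :
    (σ i : BraidGroup n) = PresentedGroup.of (⟨i - 1, by omega⟩ : Fin (n - 1)) := by
  rw [σ]; exact dif_pos ⟨h1, h2⟩

lemma sigma_comm {n : ℕ} {i j : ℕ} (h1 : 1 ≤ i) (h2 : i + 2 ≤ j) (h3 : j < n) :
    (σ i : BraidGroup n) * σ j = σ j * σ i := by
  rw [sigma_of h1 (by omega), sigma_of (i := j) (by omega) h3]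
  set a : Fin (n-1) := ⟨i-1, by omega⟩
  set b : Fin (n-1) := ⟨j-1, by omega⟩
  have hr : (FreeGroup.of a * FreeGroup.of b * (FreeGroup.of a)⁻¹ * (FreeGroup.of b)⁻¹)
      ∈ braidRels n := ⟨a, b, Or.inl ⟨by simp only [a, b]; omega, rfl⟩⟩
  have h4 : (PresentedGroup.of a : PresentedGroup (braidRels n)) *
      PresentedGroup.of b * (PresentedGroup.of a)⁻¹ * (PresentedGroup.of b)⁻¹ = 1 := by
    have := braid_rel_eq_one hr
    simpa only [map_mul, map_inv, PresentedGroup.of] using this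
  have h5 : (PresentedGroup.of a : PresentedGroup (braidRels n)) * PresentedGroup.of b *
      (PresentedGroup.of b * PresentedGroup.of a)⁻¹ = 1 := by
    rw [mul_inv_rev, ← mul_assoc]; exact h4
  exact mul_inv_eq_one.mp h5

lemma sigma_braid {n : ℕ} {i : ℕ} (h1 : 1 ≤ i) (h2 : i + 1 < n) :
    (σ i : BraidGroup n) * σ (i+1) * σ i = σ (i+1) * σ i * σ (i+1) := by
  rw [sigma_of h1 (by omega), sigma_of (i := i+1) (by omega) h2]
  set a : Fin (n-1) := ⟨i-1, by omega⟩
  set b : Fin (n-1) := ⟨i+1-1, by omega⟩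
  have hr : (FreeGroup.of a * FreeGroup.of b * FreeGroup.of a *
      (FreeGroup.of b * FreeGroup.of a * FreeGroup.of b)⁻¹) ∈ braidRels n :=
    ⟨a, b, Or.inr ⟨by simp only [a, b]; omega, rfl⟩⟩
  have h4 : (PresentedGroup.of a : PresentedGroup (braidRels n)) * PresentedGroup.of b *
      PresentedGroup.of a * (PresentedGroup.of b * PresentedGroup.of a *
      PresentedGroup.of b)⁻¹ = 1 := by
    have := braid_rel_eq_one hr
    simpa only [map_mul, map_inv, PresentedGroup.of] using this
  exact mul_inv_eq_one.mp h4

open scoped commutatorElement in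
lemma comm_of_braid {G : Type*} [Group G] (a b : G) (hb : a * b * a = b * a * b) :
    a * b⁻¹ = ⁅a, a * b⁆ := by
  have h2 : (a * b) * a * (a * b)⁻¹ = b := by rw [hb]; group
  calc a * b⁻¹ = a * ((a * b) * a * (a * b)⁻¹)⁻¹ := by rw [h2]
  _ = ⁅a, a * b⁆ := by rw [commutatorElement_def]; group

theorem commutator_eq_normal_closure (n : ℕ) (hn : 5 ≤ n) :
    Subgroup.normalClosure ({σ 1 * (σ 2)⁻¹} : Set (BraidGroup n)) =
      commutator (BraidGroup n) := by
  set N := Subgroup.normalClosure ({σ 1 * (σ 2)⁻¹} : Set (BraidGroup n)) with hN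
  set π := QuotientGroup.mk' N with hπ
  apply le_antisymm
  · -- N ≤ commutator
    apply Subgroup.normalClosure_le_normal
    intro x hx
    rw [Set.mem_singleton_iff] at hx
    subst hx
    have hb : (σ 1 : BraidGroup n) * σ 2 * σ 1 = σ 2 * σ 1 * σ 2 := by
      simpa using sigma_braid (n := n) (i := 1) le_rfl (by omega)
    rw [comm_of_braid _ _ hb]
    exact Subgroup.commutator_mem_commutator (Subgroup.mem_top _) (Subgroup.mem_top _)
  · -- commutator ≤ N
    rw [commutator_def, Subgroup.commutator_le]
    intro g _ h _
    have hker : (QuotientGroup.mk' N).ker = N := QuotientGroup.ker_mk' N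
    rw [← hker, MonoidHom.mem_ker, map_commutatorElement,
      commutatorElement_eq_one_iff_commute]
    -- all generators become equal in the quotient
    have base : π (σ 2) = π (σ 1) := by
      have h12 : (σ 1 : BraidGroup n) * (σ 2)⁻¹ ∈ N :=
        Subgroup.subset_normalClosure rfl
      have h13 : π (σ 1 * (σ 2)⁻¹) = 1 := by
        rw [← hker] at h12; exact h12
      rw [map_mul, map_inv, mul_inv_eq_one] at h13
      exact h13.symm
    have key : ∀ i : ℕ, 1 ≤ i → i < n → π (σ i) = π (σ 1) := by
      intro i
      induction i using Nat.strong_induction_on with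
      | _ i ih =>
        intro hi1 hin
        match i, hi1 with
        | 1, _ => rfl
        | 2, _ => exact base
        | (k+3), _ =>
          have hk1 : π (σ (k+1)) = π (σ 1) := ih (k+1) (by omega) (by omega) (by omega)
          have hk2 : π (σ (k+2)) = π (σ 1) := ih (k+2) (by omega) (by omega) (by omega)
          have hcomm : π (σ 1) * π (σ (k+3)) = π (σ (k+3)) * π (σ 1) := by
            have h5 := congrArg π (sigma_comm (n := n) (i := k+1) (j := k+3)
              (by omega) (by omega) hin)
            simpa only [map_mul, hk1] using h5
          have hbr : π (σ 1) * π (σ (k+3)) * π (σ 1)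
              = π (σ (k+3)) * π (σ 1) * π (σ (k+3)) := by
            have h5 := congrArg π (sigma_braid (n := n) (i := k+2) (by omega) (by omega))
            simpa only [map_mul, hk2] using h5
          set t := π (σ 1)
          set s := π (σ (k+3))
          have h6 : s * (t * t) = s * (t * s) := by
            calc s * (t * t) = t * s * t := by rw [← mul_assoc, ← hcomm]
            _ = s * t * s := hbr
            _ = s * (t * s) := by rw [mul_assoc]
          exact (mul_left_cancel (mul_left_cancel h6)).symm
    -- the quotient is generated by π (σ 1)
    have hgen : Subgroup.closure ({π (σ 1)} : Set (BraidGroup n ⧸ N)) = ⊤ := by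
      have htop : (⊤ : Subgroup (BraidGroup n)) = @Subgroup.closure (BraidGroup n) _ (@Set.range (BraidGroup n) _
          (PresentedGroup.of : Fin (n - 1) → BraidGroup n)) :=
        (PresentedGroup.closure_range_of (braidRels n)).symm
      rw [eq_top_iff,
        ← Subgroup.map_top_of_surjective π (QuotientGroup.mk'_surjective N),
        htop, MonoidHom.map_closure]
      refine (Subgroup.closure_le _).2 ?_
      rintro x ⟨y, ⟨a, rfl⟩, rfl⟩
      have h7 : (PresentedGroup.of a : BraidGroup n) = σ ((a : ℕ) + 1) := by
        have ha : (a : ℕ) < n - 1 := a.isLt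
        rw [sigma_of (by omega) (by omega : (a : ℕ) + 1 < n)]
        congr 1
      have h8 : π (PresentedGroup.of a : BraidGroup n) = π (σ 1) := by
        rw [h7, key ((a : ℕ) + 1) (by omega) (by omega)]
      exact h8 ▸ Subgroup.subset_closure rfl
    have hg : π g ∈ Subgroup.closure ({π (σ 1)} : Set (BraidGroup n ⧸ N)) :=
      hgen ▸ Subgroup.mem_top _
    have hh : π h ∈ Subgroup.closure ({π (σ 1)} : Set (BraidGroup n ⧸ N)) :=
      hgen ▸ Subgroup.mem_top _
    obtain ⟨p, hp⟩ := Subgroup.mem_closure_singleton.mp hg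
    obtain ⟨q, hq⟩ := Subgroup.mem_closure_singleton.mp hh
    rw [← hp, ← hq]
    exact Commute.zpow_zpow (Commute.refl _) p q
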